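/- For n odd, n ≥ 3, the minimum over all proper 3-colorings c of C_n of the minimum size of a critical set for c equals (n+1)/2. That is, SCS_min(C_n) = (n+1)/2. -/

import Mathlib

open SimpleGraph Finset

/-- A proper `k`-coloring of a simple graph: adjacent vertices get distinct colors. -/
def properColoring {V : Type*} (G : SimpleGraph V) (k : ℕ) (c : V → Fin k) : Prop :=
  ∀ ⦃v w : V⦄, G.Adj v w → c v ≠ c w

/-- `S` is a determining set for `(G, c)`: `c` is the unique proper `k`-coloring
agreeing with `c` on `S`. -/
def Determining {V : Type*} (G : SimpleGraph V) {k : ℕ} (c : V → Fin k) (S : Finset V) : Prop :=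
  ∀ c' : V → Fin k, properColoring G k c' → (∀ v ∈ S, c' v = c v) → c' = c

/-- A critical set: an inclusion-minimal determining set. -/
def CriticalSet {V : Type*} (G : SimpleGraph V) {k : ℕ} (c : V → Fin k) (S : Finset V) : Prop :=
  Determining G c S ∧ ∀ T : Finset V, T ⊂ S → ¬ Determining G c T

/-- The cycle graph on `Fin n`, with `i` adjacent to `i ± 1` (mod `n`). -/
def cycGraph (n : ℕ) [NeZero n] : SimpleGraph (Fin n) :=
  SimpleGraph.fromRel (fun i j => i + 1 = j)

/-- A vertex is colorful if every color appears on its closed neighborhood. -/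
def Colorful {V : Type*} (G : SimpleGraph V) {k : ℕ} (c : V → Fin k) (v : V) : Prop :=
  ∀ a : Fin k, ∃ w : V, (w = v ∨ G.Adj v w) ∧ c w = a

/-- `G` is uniquely `k`-colorable: any two proper `k`-colorings differ by a permutation
of the colors. -/
def UniquelyColorable {V : Type*} (G : SimpleGraph V) (k : ℕ) : Prop :=
  ∀ c c' : V → Fin k, properColoring G k c → properColoring G k c' →
    ∃ π : Equiv.Perm (Fin k), c' = π ∘ c

/-! ### Auxiliary lemmas -/

lemma cyc_adj (n : ℕ) [NeZero n] (i j : Fin n) :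
    (cycGraph n).Adj i j ↔ i ≠ j ∧ (i + 1 = j ∨ j + 1 = i) := by
  simp [cycGraph, SimpleGraph.fromRel_adj]

lemma fin_two_ne (n : ℕ) [NeZero n] (h3 : 3 ≤ n) : (2 : Fin n) ≠ 0 := by
  intro h
  rw [Fin.ext_iff] at h
  have : (2 : Fin n).val = 2 % n := rfl
  have h0 : (0 : Fin n).val = 0 := rfl
  rw [this, h0, Nat.mod_eq_of_lt (by omega)] at h
  omega

lemma fin_one_ne (n : ℕ) [NeZero n] (h3 : 3 ≤ n) : (1 : Fin n) ≠ 0 := by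
  intro h
  rw [Fin.ext_iff, Fin.val_one'] at h
  have h0 : (0 : Fin n).val = 0 := rfl
  rw [h0, Nat.mod_eq_of_lt (by omega)] at h
  omega

lemma finSuccNeSelf (n : ℕ) [NeZero n] (h3 : 3 ≤ n) (w : Fin n) : w + 1 ≠ w := by
  intro h; exact fin_one_ne n h3 (by simpa using congrArg (· - w) h)

lemma adj_succ (n : ℕ) [NeZero n] (h3 : 3 ≤ n) (w : Fin n) :
    (cycGraph n).Adj w (w + 1) := by
  rw [cyc_adj]; exact ⟨Ne.symm (finSuccNeSelf n h3 w), Or.inl rfl⟩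

/-- If two adjacent vertices both lie outside `S`, then `S` is not determining. -/
lemma key (n : ℕ) [NeZero n] (h3 : 3 ≤ n) (c : Fin n → Fin 3)
    (hc : properColoring (cycGraph n) 3 c) (S : Finset (Fin n)) (v : Fin n)
    (hv : v ∉ S) (hv1 : v + 1 ∉ S) : ¬ Determining (cycGraph n) c S := by
  have h2 : (2 : Fin n) ≠ 0 := fin_two_ne n h3
  have d1 : ∀ w : Fin n, w + 1 ≠ w := finSuccNeSelf n h3
  have d2 : ∀ w : Fin n, w + 1 + 1 ≠ w := by
    intro w h
    apply h2
    have := congrArg (· - w) h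
    simp at this
    rw [add_assoc] at this
    have h' : (1 : Fin n) + 1 = 0 := by simpa using this
    rw [Fin.ext_iff, Fin.val_add, Fin.val_one', Nat.mod_eq_of_lt (show 1 < n by omega)] at h'
    exact Fin.ext h'
  have adjsucc : ∀ w : Fin n, (cycGraph n).Adj w (w + 1) := adj_succ n h3
  have hxa : c v ≠ c (v - 1) := by
    have : (cycGraph n).Adj (v - 1) v := by
      have := adjsucc (v - 1); rwa [sub_add_cancel] at this
    exact (hc this).symm
  have hxy : c v ≠ c (v + 1) := hc (adjsucc v)
  have hyb : c (v + 1) ≠ c (v + 1 + 1) := hc (adjsucc (v + 1))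
  have hex : ∀ a b x y : Fin 3, x ≠ a → x ≠ y → y ≠ b →
      ∃ x' y' : Fin 3, x' ≠ a ∧ x' ≠ y' ∧ y' ≠ b ∧ ¬(x' = x ∧ y' = y) := by decide
  obtain ⟨x', y', ha', hxy', hb', hne⟩ :=
    hex (c (v-1)) (c (v+1+1)) (c v) (c (v+1)) hxa hxy hyb
  set c' : Fin n → Fin 3 := fun i => if i = v then x' else if i = v + 1 then y' else c i with hc'
  intro hdet
  have hvv1 : v ≠ v + 1 := fun h => d1 v h.symm
  have hcv : c' v = x' := by simp [hc']
  have hcv1 : c' (v+1) = y' := by simp [hc', hvv1.symm]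
  have hprop : properColoring (cycGraph n) 3 c' := by
    have main : ∀ i : Fin n, c' i ≠ c' (i + 1) := by
      intro i
      by_cases hiv : i = v
      · subst hiv; rw [hcv, hcv1]; exact hxy'
      · by_cases hiv1 : i = v + 1
        · subst hiv1
          rw [hcv1]
          have e1 : v + 1 + 1 ≠ v := d2 v
          have e2 : v + 1 + 1 ≠ v + 1 := d1 (v+1)
          simp only [hc', if_neg e1, if_neg e2]
          exact hb'
        · have ei : c' i = c i := by simp [hc', hiv, hiv1]
          by_cases hiv' : i + 1 = v
          · rw [ei, hiv', hcv]
            have : i = v - 1 := by rw [← hiv']; simp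
            rw [this]
            exact fun h => ha' h.symm
          · have : i + 1 ≠ v + 1 := fun h => hiv (by simpa using h)
            have ei1 : c' (i + 1) = c (i + 1) := by simp [hc', hiv', this]
            rw [ei, ei1]
            exact hc (adjsucc i)
    intro i j hadj
    rw [cyc_adj] at hadj
    obtain ⟨hne', h | h⟩ := hadj
    · rw [← h]; exact main i
    · rw [← h]; exact (main j).symm
  have hagree : ∀ w ∈ S, c' w = c w := by
    intro w hw
    have w1 : w ≠ v := fun h => hv (h ▸ hw)
    have w2 : w ≠ v + 1 := fun h => hv1 (h ▸ hw)
    simp [hc', w1, w2]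
  have := hdet c' hprop hagree
  exact hne ⟨by rw [← hcv, this], by rw [← hcv1, this]⟩

lemma lower (n : ℕ) [NeZero n] (hn : Odd n)
    (S : Finset (Fin n))
    (hind : ∀ v : Fin n, v ∉ S → v + 1 ∈ S) :
    (n + 1) / 2 ≤ S.card := by
  set T := Sᶜ with hT
  have hTS : S.card + T.card = n := by
    rw [hT, Finset.card_add_card_compl]; simp
  have hdisj : Disjoint T (T.image (· + 1)) := by
    rw [Finset.disjoint_right]
    intro j hj hj'
    rw [Finset.mem_image] at hj
    obtain ⟨i, hi, rfl⟩ := hj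
    have : i ∉ S := by simpa [hT] using hi
    have := hind i this
    rw [hT] at hj'
    simp at hj'
    exact hj' this
  have hcard : T.card + T.card ≤ n := by
    have := Finset.card_union_of_disjoint hdisj
    have hle : (T ∪ T.image (· + 1)).card ≤ n := by
      have := Finset.card_le_univ (T ∪ T.image (· + 1))
      simpa using this
    have himg : (T.image (· + 1)).card = T.card :=
      Finset.card_image_of_injective _ (add_left_injective 1)
    omega
  obtain ⟨k, hk⟩ := hn
  omega

/-! ### The explicit coloring -/

def col (m j : ℕ) : Fin 3 :=
  if j = 2*m then 2
  else if j % 2 = 1 then (if j = 2*m-1 then (if m % 2 = 1 then 1 else 0) else 2)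
  else (if (j/2) % 2 = 1 then 1 else 0)

lemma col_adj (m j : ℕ) (hm : 1 ≤ m) (hj : j < 2*m) : col m j ≠ col m (j+1) := by
  unfold col
  split_ifs <;> first | decide | omega | (exfalso; assumption)

lemma col_wrap (m : ℕ) (hm : 1 ≤ m) : col m (2*m) ≠ col m 0 := by
  unfold col
  split_ifs <;> first | decide | omega | (exfalso; assumption)

lemma col_gap (m j : ℕ) (hm : 1 ≤ m) (hj : j % 2 = 1) (hj2 : j < 2*m) :
    col m (j-1) ≠ col m (j+1) := by
  unfold col
  split_ifs <;> first | decide | omega | (exfalso; assumption)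

lemma range_even_card (n : ℕ) :
    ((Finset.range n).filter (fun x => x % 2 = 0)).card = (n + 1) / 2 := by
  induction n with
  | zero => simp
  | succ k ih =>
    rw [Finset.range_add_one, Finset.filter_insert]
    by_cases h : k % 2 = 0
    · rw [if_pos h, Finset.card_insert_of_notMem (by simp)]
      omega
    · rw [if_neg h]
      omega

lemma upper (n : ℕ) [NeZero n] (hn : Odd n) (h3 : 3 ≤ n) :
    ∃ (c : Fin n → Fin 3) (S : Finset (Fin n)),
      properColoring (cycGraph n) 3 c ∧ CriticalSet (cycGraph n) c S ∧
      S.card = (n + 1) / 2 := by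
  obtain ⟨m, hm, hm1⟩ : ∃ m, n = 2*m + 1 ∧ 1 ≤ m := by
    obtain ⟨k, hk⟩ := hn; exact ⟨k, by omega, by omega⟩
  set c : Fin n → Fin 3 := fun i => col m i.val with hcdef
  set S : Finset (Fin n) := Finset.univ.filter (fun i : Fin n => i.val % 2 = 0) with hSdef
  have hval1 : (1 : Fin n).val = 1 := by
    rw [Fin.val_one']; exact Nat.mod_eq_of_lt (by omega)
  have hadd : ∀ i : Fin n, (i + 1).val = (i.val + 1) % n := by
    intro i; rw [Fin.val_add, hval1]
  -- properness
  have hprop : properColoring (cycGraph n) 3 c := by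
    have main : ∀ i : Fin n, c i ≠ c (i + 1) := by
      intro i
      by_cases hi : i.val = 2*m
      · have : (i + 1).val = 0 := by rw [hadd, hi, hm, Nat.mod_self]
        rw [hcdef]
        simp only []
        rw [hi, this]
        exact col_wrap m hm1
      · have hilt : i.val < 2*m := by have := i.isLt; omega
        have : (i + 1).val = i.val + 1 := by
          rw [hadd]; exact Nat.mod_eq_of_lt (by omega)
        rw [hcdef]
        simp only []
        rw [this]
        exact col_adj m i.val hm1 hilt
    intro i j hadj
    rw [cyc_adj] at hadj
    obtain ⟨hne', h | h⟩ := hadj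
    · rw [← h]; exact main i
    · rw [← h]; exact (main j).symm
  -- determining
  have hdet : Determining (cycGraph n) c S := by
    intro c' hc' hag
    funext i
    by_cases hi : i.val % 2 = 0
    · exact hag i (by simp [hSdef, hi])
    · have hj : i.val % 2 = 1 := by omega
      have hjle : i.val ≤ 2*m - 1 := by
        have := i.isLt; omega
      have hj1 : 1 ≤ i.val := by omega
      set j := i.val with hjdef
      have hu : j - 1 < n := by omega
      set u : Fin n := ⟨j - 1, hu⟩ with hudef
      have hu1 : u + 1 = i := by
        rw [Fin.ext_iff, hadd]
        show (j - 1 + 1) % n = j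
        rw [Nat.sub_add_cancel hj1]
        exact Nat.mod_eq_of_lt i.isLt
      have hii : (i + 1).val = j + 1 := by
        rw [hadd]; exact Nat.mod_eq_of_lt (by omega)
      have huS : u ∈ S := by simp [hSdef, hudef]; omega
      have hi1S : i + 1 ∈ S := by simp [hSdef, hii]; omega
      have hadjui : (cycGraph n).Adj u i := by
        have := adj_succ n h3 u; rwa [hu1] at this
      have hadjii : (cycGraph n).Adj i (i + 1) := adj_succ n h3 i
      have e1 : c' u = c u := hag u huS
      have e2 : c' (i+1) = c (i+1) := hag _ hi1S
      have f1 : c' i ≠ c u := by rw [← e1]; exact (hc' hadjui).symm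
      have f2 : c' i ≠ c (i+1) := by rw [← e2]; exact hc' hadjii
      have f3 : c i ≠ c u := (hprop hadjui).symm
      have f4 : c i ≠ c (i+1) := hprop hadjii
      have f5 : c u ≠ c (i+1) := by
        show col m u.val ≠ col m (i+1).val
        rw [hii]
        show col m (j - 1) ≠ col m (j + 1)
        exact col_gap m j hm1 hj (by omega)
      have pig : ∀ a b p q : Fin 3, a ≠ b → p ≠ a → p ≠ b → q ≠ a → q ≠ b → p = q := by
        decide
      exact pig (c u) (c (i+1)) (c' i) (c i) f5 f1 f2 f3 f4
  -- minimality
  have hmin : ∀ T : Finset (Fin n), T ⊂ S → ¬ Determining (cycGraph n) c T := by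
    intro T hT
    obtain ⟨s, hsS, hsT⟩ := Finset.exists_of_ssubset hT
    have hTS : T ⊆ S := hT.subset
    have hse : s.val % 2 = 0 := by
      have := hsS; rw [hSdef] at this; simpa using this
    by_cases hs : s.val = 2*m
    · have hvlt : 2*m - 1 < n := by omega
      set v : Fin n := ⟨2*m - 1, hvlt⟩ with hvdef
      have hv1 : v + 1 = s := by
        rw [Fin.ext_iff, hadd]
        show (2*m - 1 + 1) % n = s.val
        rw [Nat.sub_add_cancel (by omega), hs]
        exact Nat.mod_eq_of_lt (by omega)
      have hvS : v ∉ S := by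
        rw [hSdef]; simp [hvdef]; omega
      exact key n h3 c hprop T v (fun h => hvS (hTS h)) (by rw [hv1]; exact hsT)
    · have hslt : s.val < 2*m := by have := s.isLt; omega
      have hv1S : s + 1 ∉ S := by
        rw [hSdef]
        have : (s + 1).val = s.val + 1 := by
          rw [hadd]; exact Nat.mod_eq_of_lt (by omega)
        simp [this]; omega
      exact key n h3 c hprop T s hsT (fun h => hv1S (hTS h))
  -- cardinality
  have hcard : S.card = (n + 1) / 2 := by
    have himg : S.image Fin.val = (Finset.range n).filter (fun x => x % 2 = 0) := by
      ext x
      simp only [Finset.mem_image, Finset.mem_filter, Finset.mem_range, hSdef,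
        Finset.mem_filter, Finset.mem_univ, true_and]
      constructor
      · rintro ⟨i, hi, rfl⟩; exact ⟨i.isLt, hi⟩
      · rintro ⟨hx, hx2⟩; exact ⟨⟨x, hx⟩, hx2, rfl⟩
    have := Finset.card_image_of_injective S Fin.val_injective
    rw [himg] at this
    rw [← this, range_even_card]
  exact ⟨c, S, hprop, ⟨hdet, hmin⟩, hcard⟩

theorem stmt6 (n : ℕ) [NeZero n] (hn : Odd n) (h3 : 3 ≤ n) :
    IsLeast {m : ℕ | ∃ (c : Fin n → Fin 3) (S : Finset (Fin n)),
      properColoring (cycGraph n) 3 c ∧ CriticalSet (cycGraph n) c S ∧ S.card = m}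
      ((n + 1) / 2) := by
  constructor
  · obtain ⟨c, S, h1, h2, h3'⟩ := upper n hn h3
    exact ⟨c, S, h1, h2, h3'⟩
  · rintro m ⟨c, S, hc, hcrit, rfl⟩
    apply lower n hn
    intro v hv
    by_contra hv1
    exact key n h3 c hc S v hv hv1 hcrit.1
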